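/- Assume n ≥ 2 and let (Mᵢ, φ_{ij}) be descent data over (S,(Sᵢ)). Then the product of the maps φ_{ni} (i = 1,…,n−1) restricts to a well-defined S-linear isomorphism from the submodule {(pᵢ)_{i<n} ∈ ∏_{i=1}^{n-1} Mₙ/(IᵢMₙ) : for all i ≠ j < n, the images of pᵢ and pⱼ in Mₙ/((Iᵢ+Iⱼ)Mₙ) coincide} onto the submodule {(qᵢ)_{i<n} ∈ ∏_{i=1}^{n-1} Mᵢ/(IₙMᵢ) : for all i ≠ j < n, the map induced by φ_{ij} on quotients by (Iⱼ+Iₙ) sends the image of qᵢ in Mᵢ/((Iⱼ+Iₙ)Mᵢ) to the image of qⱼ in Mⱼ/((Iᵢ+Iₙ)Mⱼ)}. Well-definedness follows from the cocycle condition. -/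

import Mathlib

set_option maxHeartbeats 1000000
set_option synthInstance.maxHeartbeats 400000

open MvPolynomial TensorProduct

/-- The principal ideal `(x₁ ⋯ xₙ)` in `k[x₁,…,xₙ]`. -/
noncomputable abbrev sncIdeal (k : Type) [Field k] (n : ℕ) : Ideal (MvPolynomial (Fin n) k) :=
  Ideal.span {∏ i : Fin n, (X i : MvPolynomial (Fin n) k)}

/-- The simple normal crossings model `R = k[x₁,…,xₙ]/(x₁⋯xₙ)`. -/
abbrev SNCModel (k : Type) [Field k] (n : ℕ) : Type :=
  MvPolynomial (Fin n) k ⧸ sncIdeal k n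

/-- For an algebra `S` over the simple normal crossings model, the ideal `Iᵢ ⊆ S`
generated by the image of `xᵢ`. -/
def xIdeal (k : Type) [Field k] (n : ℕ) (S : Type) [CommRing S]
    [Algebra (SNCModel k n) S] (i : Fin n) : Ideal S :=
  Ideal.span {algebraMap (SNCModel k n) S (Ideal.Quotient.mk (sncIdeal k n) (X i))}

/-- The natural map `M ⧸ p → M ⧸ q` for submodules `p ≤ q`. -/
def qfactor {S : Type*} [CommRing S] {M : Type*} [AddCommGroup M] [Module S M]
    {p q : Submodule S M} (h : p ≤ q) : (M ⧸ p) →ₗ[S] M ⧸ q :=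
  Submodule.mapQ p q LinearMap.id fun _ hx => h hx

/-- In a quotient `B ⧸ (J • ⊤)`, every element of `I ≤ J` acts by zero. -/
lemma smul_quot_top_eq_zero {S : Type*} [CommRing S] {B : Type*} [AddCommGroup B]
    [Module S B] {I J : Ideal S} (h : I ≤ J) {r : S} (hr : r ∈ I)
    (z : B ⧸ (J • (⊤ : Submodule S B))) : r • z = 0 := by
  obtain ⟨y, rfl⟩ := Submodule.Quotient.mk_surjective _ z
  rw [← Submodule.Quotient.mk_smul, Submodule.Quotient.mk_eq_zero]
  exact Submodule.smul_mem_smul (h hr) Submodule.mem_top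

section Hierarchical

variable (k : Type) [Field k] (m : ℕ) (S : Type) [CommRing S]
  [Algebra (SNCModel k (m + 1)) S]
variable (M : Fin (m + 1) → Type) [∀ i, AddCommGroup (M i)] [∀ i, Module S (M i)]
variable (φ : ∀ i j : Fin (m + 1), i ≠ j →
  ((M i ⧸ xIdeal k (m + 1) S j • (⊤ : Submodule S (M i))) ≃ₗ[S]
    (M j ⧸ xIdeal k (m + 1) S i • (⊤ : Submodule S (M j)))))

/-- The map `Mᵢ/(I_l Mᵢ) → Mⱼ/((Iᵢ+I_l)Mⱼ)` induced by `φ_{ij} : Mᵢ/(IⱼMᵢ) → Mⱼ/(IᵢMⱼ)`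
on quotients. -/
def glueMap (i j : Fin (m + 1)) (h : i ≠ j) (l : Fin (m + 1)) :
    (M i ⧸ xIdeal k (m + 1) S l • (⊤ : Submodule S (M i))) →ₗ[S]
      (M j ⧸ (xIdeal k (m + 1) S i ⊔ xIdeal k (m + 1) S l) • (⊤ : Submodule S (M j))) :=
  Submodule.liftQ (xIdeal k (m + 1) S l • (⊤ : Submodule S (M i)))
    ((qfactor (Submodule.smul_mono_left
        (le_sup_left : xIdeal k (m + 1) S i ≤ xIdeal k (m + 1) S i ⊔ xIdeal k (m + 1) S l))).comp
      ((φ i j h).toLinearMap.comp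
        (Submodule.mkQ (xIdeal k (m + 1) S j • (⊤ : Submodule S (M i))))))
    (by
      rw [Submodule.smul_le]
      intro r hr x _
      rw [LinearMap.mem_ker, map_smul]
      exact smul_quot_top_eq_zero
        (le_sup_right : xIdeal k (m + 1) S l ≤ xIdeal k (m + 1) S i ⊔ xIdeal k (m + 1) S l)
        hr _)

/-- The submodule of compatible tuples in `∏_{i<n} Mₙ/(IᵢMₙ)`. -/
def psiTwoSource : Submodule S
    (∀ i : Fin m, M (Fin.last m) ⧸
      xIdeal k (m + 1) S i.castSucc • (⊤ : Submodule S (M (Fin.last m)))) :=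
  ⨅ (i : Fin m) (j : Fin m) (_ : i ≠ j),
    LinearMap.eqLocus
      ((qfactor (Submodule.smul_mono_left
          (le_sup_left : xIdeal k (m + 1) S i.castSucc ≤
            xIdeal k (m + 1) S i.castSucc ⊔ xIdeal k (m + 1) S j.castSucc))).comp
        (LinearMap.proj i))
      ((qfactor (Submodule.smul_mono_left
          (le_sup_right : xIdeal k (m + 1) S j.castSucc ≤
            xIdeal k (m + 1) S i.castSucc ⊔ xIdeal k (m + 1) S j.castSucc))).comp
        (LinearMap.proj j))

/-- The submodule of `φ`-compatible tuples in `∏_{i<n} Mᵢ/(IₙMᵢ)`. -/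
def psiTwoTarget : Submodule S
    (∀ i : Fin m, M i.castSucc ⧸
      xIdeal k (m + 1) S (Fin.last m) • (⊤ : Submodule S (M i.castSucc))) :=
  ⨅ (i : Fin m) (j : Fin m) (h : i ≠ j),
    LinearMap.eqLocus
      ((glueMap k m S M φ i.castSucc j.castSucc ((Fin.castSucc_injective m).ne h)
          (Fin.last m)).comp (LinearMap.proj i))
      ((qfactor (Submodule.smul_mono_left
          (le_sup_right : xIdeal k (m + 1) S (Fin.last m) ≤
            xIdeal k (m + 1) S i.castSucc ⊔ xIdeal k (m + 1) S (Fin.last m)))).comp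
        (LinearMap.proj j))

/-- The product of the maps `φ_{ni} : Mₙ/(IᵢMₙ) → Mᵢ/(IₙMᵢ)`. -/
def psiTwo :
    (∀ i : Fin m, M (Fin.last m) ⧸
        xIdeal k (m + 1) S i.castSucc • (⊤ : Submodule S (M (Fin.last m)))) →ₗ[S]
      ∀ i : Fin m, M i.castSucc ⧸
        xIdeal k (m + 1) S (Fin.last m) • (⊤ : Submodule S (M i.castSucc)) :=
  LinearMap.pi fun i : Fin m =>
    (φ (Fin.last m) i.castSucc (Fin.castSucc_lt_last i).ne').toLinearMap.comp
      (LinearMap.proj i)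

end Hierarchical


section AuxLemmas

lemma qfactor_mk {S : Type*} [CommRing S] {M : Type*} [AddCommGroup M] [Module S M]
    {p q : Submodule S M} (h : p ≤ q) (x : M) :
    qfactor h (Submodule.Quotient.mk x) = Submodule.Quotient.mk x := rfl

lemma mk_mem_smul_top_iff {S : Type*} [CommRing S] {B : Type*} [AddCommGroup B] [Module S B]
    (I J : Ideal S) (x : B) :
    (Submodule.Quotient.mk x : B ⧸ (J • (⊤ : Submodule S B))) ∈
      I • (⊤ : Submodule S (B ⧸ J • (⊤ : Submodule S B))) ↔
    x ∈ (I ⊔ J) • (⊤ : Submodule S B) := by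
  have hker : Submodule.map (J • ⊤ : Submodule S B).mkQ (J • (⊤ : Submodule S B)) = ⊥ := by
    rw [eq_bot_iff]
    rintro z hz
    obtain ⟨y, hy, rfl⟩ := hz
    simpa [Submodule.Quotient.mk_eq_zero] using hy
  have hmap : Submodule.map (J • ⊤ : Submodule S B).mkQ ((I ⊔ J) • ⊤) =
      I • (⊤ : Submodule S (B ⧸ J • (⊤ : Submodule S B))) := by
    rw [Submodule.sup_smul, Submodule.map_sup, hker, sup_bot_eq, Submodule.map_smul'',
      Submodule.map_top, Submodule.range_mkQ]
  constructor
  · intro h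
    rw [← hmap] at h
    obtain ⟨y, hy, hyx⟩ := h
    have hsub : y - x ∈ J • (⊤ : Submodule S B) :=
      (Submodule.Quotient.eq _).mp hyx
    have := sub_mem hy (Submodule.smul_mono_left le_sup_right hsub)
    simpa using this
  · intro h
    rw [← hmap]
    exact ⟨x, h, rfl⟩

lemma mem_smul_top_equiv {S : Type*} [CommRing S] {B C : Type*} [AddCommGroup B] [Module S B]
    [AddCommGroup C] [Module S C] (e : B ≃ₗ[S] C) (I : Ideal S) (z : B) :
    e z ∈ I • (⊤ : Submodule S C) ↔ z ∈ I • (⊤ : Submodule S B) := by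
  constructor
  · intro h
    have := Submodule.mem_map_of_mem (f := e.symm.toLinearMap) h
    rw [Submodule.map_smul'', Submodule.map_top, LinearEquiv.range] at this
    simpa using this
  · intro h
    have := Submodule.mem_map_of_mem (f := e.toLinearMap) h
    rw [Submodule.map_smul'', Submodule.map_top, LinearEquiv.range] at this
    simpa using this

lemma glueMap_mk (k : Type) [Field k] (m : ℕ) (S : Type) [CommRing S]
    [Algebra (SNCModel k (m + 1)) S]
    (M : Fin (m + 1) → Type) [∀ i, AddCommGroup (M i)] [∀ i, Module S (M i)]
    (φ : ∀ i j : Fin (m + 1), i ≠ j →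
      ((M i ⧸ xIdeal k (m + 1) S j • (⊤ : Submodule S (M i))) ≃ₗ[S]
        (M j ⧸ xIdeal k (m + 1) S i • (⊤ : Submodule S (M j)))))
    (i j : Fin (m + 1)) (h : i ≠ j) (l : Fin (m + 1)) (x : M i) :
    glueMap k m S M φ i j h l (Submodule.Quotient.mk x) =
      qfactor (Submodule.smul_mono_left le_sup_left)
        (φ i j h (Submodule.Quotient.mk x)) := rfl

end AuxLemmas

/-- the product of the maps `φ_{ni}` restricts to a bijection (hence an
`S`-linear isomorphism) between the submodule of compatible tuples in `∏_{i<n} Mₙ/(IᵢMₙ)`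
and the submodule of `φ`-compatible tuples in `∏_{i<n} Mᵢ/(IₙMᵢ)`. -/
theorem statement5 (k : Type) [Field k] (m : ℕ) (hm : 1 ≤ m)
    (S : Type) [CommRing S] [Algebra (SNCModel k (m + 1)) S]
    [Module.Flat (SNCModel k (m + 1)) S]
    (M : Fin (m + 1) → Type) [∀ i, AddCommGroup (M i)] [∀ i, Module S (M i)]
    [∀ i, Module (S ⧸ xIdeal k (m + 1) S i) (M i)]
    [∀ i, IsScalarTower S (S ⧸ xIdeal k (m + 1) S i) (M i)]
    [∀ i, Module.Finite (S ⧸ xIdeal k (m + 1) S i) (M i)]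
    [∀ i, Module.Projective (S ⧸ xIdeal k (m + 1) S i) (M i)]
    (φ : ∀ i j : Fin (m + 1), i ≠ j →
      ((M i ⧸ xIdeal k (m + 1) S j • (⊤ : Submodule S (M i))) ≃ₗ[S]
        (M j ⧸ xIdeal k (m + 1) S i • (⊤ : Submodule S (M j)))))
    (hsymm : ∀ (i j : Fin (m + 1)) (h : i ≠ j), φ j i h.symm = (φ i j h).symm)
    (hcoc : ∀ (i j l : Fin (m + 1)) (hij : i ≠ j) (hjl : j ≠ l) (hil : i ≠ l)
      (x : M i) (y : M j),
      φ i j hij (Submodule.Quotient.mk x) = Submodule.Quotient.mk y →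
      qfactor (Submodule.smul_mono_left
          (le_sup_left : xIdeal k (m + 1) S i ≤ xIdeal k (m + 1) S i ⊔ xIdeal k (m + 1) S j))
          (φ i l hil (Submodule.Quotient.mk x)) =
        qfactor (Submodule.smul_mono_left
          (le_sup_right : xIdeal k (m + 1) S j ≤ xIdeal k (m + 1) S i ⊔ xIdeal k (m + 1) S j))
          (φ j l hjl (Submodule.Quotient.mk y))) :
    Set.BijOn (psiTwo k m S M φ) (psiTwoSource k m S M) (psiTwoTarget k m S M φ) := by
  classical
  have hne : ∀ i : Fin m, (Fin.last m) ≠ i.castSucc := fun i => (Fin.castSucc_lt_last i).ne'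
  have hne2 : ∀ {i j : Fin m}, i ≠ j → i.castSucc ≠ j.castSucc :=
    fun h => (Fin.castSucc_injective m).ne h
  have hsrc : ∀ p, p ∈ psiTwoSource k m S M ↔ ∀ (i j : Fin m), i ≠ j →
      qfactor (Submodule.smul_mono_left le_sup_left) (p i) =
      qfactor (Submodule.smul_mono_left le_sup_right) (p j) := by
    intro p
    simp only [psiTwoSource, Submodule.mem_iInf, LinearMap.mem_eqLocus,
      LinearMap.comp_apply, LinearMap.proj_apply]
  have htgt : ∀ q, q ∈ psiTwoTarget k m S M φ ↔ ∀ (i j : Fin m) (h : i ≠ j),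
      glueMap k m S M φ i.castSucc j.castSucc (hne2 h) (Fin.last m) (q i) =
      qfactor (Submodule.smul_mono_left le_sup_right) (q j) := by
    intro q
    simp only [psiTwoTarget, Submodule.mem_iInf, LinearMap.mem_eqLocus,
      LinearMap.comp_apply, LinearMap.proj_apply]
  have hpsi : ∀ p (i : Fin m), psiTwo k m S M φ p i =
      φ (Fin.last m) i.castSucc (hne i) (p i) := fun p i => rfl
  refine ⟨?_, ?_, ?_⟩
  · -- MapsTo
    intro p hp
    replace hp := (hsrc p).mp hp
    show psiTwo k m S M φ p ∈ psiTwoTarget k m S M φ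
    rw [htgt]
    intro i j hij
    obtain ⟨xi, hxi⟩ := Submodule.Quotient.mk_surjective _ (p i)
    obtain ⟨xj, hxj⟩ := Submodule.Quotient.mk_surjective _ (p j)
    obtain ⟨yi, hyi⟩ := Submodule.Quotient.mk_surjective _
      (φ (Fin.last m) i.castSucc (hne i) (p i))
    obtain ⟨yj, hyj⟩ := Submodule.Quotient.mk_surjective _
      (φ (Fin.last m) j.castSucc (hne j) (p j))
    obtain ⟨z, hz⟩ := Submodule.Quotient.mk_surjective _
      (φ i.castSucc j.castSucc (hne2 hij) (Submodule.Quotient.mk yi))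
    obtain ⟨w, hw⟩ := Submodule.Quotient.mk_surjective _
      (φ (Fin.last m) j.castSucc (hne j) (Submodule.Quotient.mk xi))
    have E1 := hcoc (Fin.last m) i.castSucc j.castSucc (hne i) (hne2 hij) (hne j) xi yi
      (by rw [hxi, hyi])
    rw [← hw, ← hz, qfactor_mk, qfactor_mk] at E1
    have h1 : w - z ∈ (xIdeal k (m+1) S i.castSucc ⊔ xIdeal k (m+1) S (Fin.last m)) •
        (⊤ : Submodule S (M j.castSucc)) := by
      have := (Submodule.Quotient.eq _).mp E1
      rwa [sup_comm] at this
    have hpij := hp i j hij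
    rw [← hxi, ← hxj, qfactor_mk, qfactor_mk] at hpij
    have h2 : xi - xj ∈ (xIdeal k (m+1) S i.castSucc ⊔ xIdeal k (m+1) S j.castSucc) •
        (⊤ : Submodule S (M (Fin.last m))) := (Submodule.Quotient.eq _).mp hpij
    have h3 : (Submodule.Quotient.mk (xi - xj) :
        M (Fin.last m) ⧸ xIdeal k (m+1) S j.castSucc • (⊤ : Submodule S (M (Fin.last m)))) ∈
        xIdeal k (m+1) S i.castSucc • (⊤ : Submodule S (M (Fin.last m) ⧸
          xIdeal k (m+1) S j.castSucc • (⊤ : Submodule S (M (Fin.last m))))) := (mk_mem_smul_top_iff _ _ _).mpr h2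
    have h4 : (Submodule.Quotient.mk (w - yj) :
        M j.castSucc ⧸ xIdeal k (m+1) S (Fin.last m) • (⊤ : Submodule S (M j.castSucc))) ∈
        xIdeal k (m+1) S i.castSucc • (⊤ : Submodule S (M j.castSucc ⧸
          xIdeal k (m+1) S (Fin.last m) • (⊤ : Submodule S (M j.castSucc)))) := by
      have heq : φ (Fin.last m) j.castSucc (hne j)
          (Submodule.Quotient.mk (xi - xj) :
            M (Fin.last m) ⧸ xIdeal k (m+1) S j.castSucc • ⊤) =
          Submodule.Quotient.mk (w - yj) := by
        rw [Submodule.Quotient.mk_sub, map_sub, ← hw, hxj, ← hyj,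
          ← Submodule.Quotient.mk_sub]
      rw [← heq, mem_smul_top_equiv]
      exact h3
    have h5 : w - yj ∈ (xIdeal k (m+1) S i.castSucc ⊔ xIdeal k (m+1) S (Fin.last m)) •
        (⊤ : Submodule S (M j.castSucc)) := (mk_mem_smul_top_iff _ _ _).mp h4
    rw [hpsi p i, hpsi p j, ← hyi, ← hyj, glueMap_mk, ← hz, qfactor_mk, qfactor_mk]
    rw [Submodule.Quotient.eq]
    have := sub_mem h5 h1
    rwa [show w - yj - (w - z) = z - yj by abel] at this
  · -- InjOn
    intro p _ p' _ heq
    funext i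
    have := congrFun heq i
    rw [hpsi p i, hpsi p' i] at this
    exact (φ (Fin.last m) i.castSucc (hne i)).injective this
  · -- SurjOn
    intro q hq
    replace hq := (htgt q).mp hq
    refine ⟨fun i => (φ (Fin.last m) i.castSucc (hne i)).symm (q i), ?_, ?_⟩
    swap
    · funext i
      rw [hpsi]
      exact (φ (Fin.last m) i.castSucc (hne i)).apply_symm_apply (q i)
    show _ ∈ psiTwoSource k m S M
    rw [hsrc]
    intro i j hij
    set p : ∀ i : Fin m, M (Fin.last m) ⧸
        xIdeal k (m + 1) S i.castSucc • (⊤ : Submodule S (M (Fin.last m))) :=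
      fun i => (φ (Fin.last m) i.castSucc (hne i)).symm (q i) with hp
    obtain ⟨xi, hxi⟩ := Submodule.Quotient.mk_surjective _ (p i)
    obtain ⟨xj, hxj⟩ := Submodule.Quotient.mk_surjective _ (p j)
    obtain ⟨yi, hyi⟩ := Submodule.Quotient.mk_surjective _ (q i)
    obtain ⟨yj, hyj⟩ := Submodule.Quotient.mk_surjective _ (q j)
    have hφi : φ (Fin.last m) i.castSucc (hne i) (Submodule.Quotient.mk xi) =
        Submodule.Quotient.mk yi := by
      rw [hxi, hp, hyi]
      exact (φ (Fin.last m) i.castSucc (hne i)).apply_symm_apply _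
    have hφj : φ (Fin.last m) j.castSucc (hne j) (Submodule.Quotient.mk xj) =
        Submodule.Quotient.mk yj := by
      rw [hxj, hp, hyj]
      exact (φ (Fin.last m) j.castSucc (hne j)).apply_symm_apply _
    obtain ⟨z, hz⟩ := Submodule.Quotient.mk_surjective _
      (φ i.castSucc j.castSucc (hne2 hij) (Submodule.Quotient.mk yi))
    obtain ⟨w, hw⟩ := Submodule.Quotient.mk_surjective _
      (φ (Fin.last m) j.castSucc (hne j) (Submodule.Quotient.mk xi))
    -- target condition
    have htc := hq i j hij
    rw [← hyi, ← hyj, glueMap_mk, ← hz, qfactor_mk, qfactor_mk] at htc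
    have h1 : z - yj ∈ (xIdeal k (m+1) S i.castSucc ⊔ xIdeal k (m+1) S (Fin.last m)) •
        (⊤ : Submodule S (M j.castSucc)) := (Submodule.Quotient.eq _).mp htc
    -- cocycle with (i, n, j)
    have hrev : φ i.castSucc (Fin.last m) (hne i).symm (Submodule.Quotient.mk yi) =
        Submodule.Quotient.mk xi := by
      rw [hsymm (Fin.last m) i.castSucc (hne i)]
      rw [hyi, hxi, hp]
    have E := hcoc i.castSucc (Fin.last m) j.castSucc (hne i).symm (hne j) (hne2 hij) yi xi hrev
    rw [← hz, ← hw, qfactor_mk, qfactor_mk] at E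
    have h2 : z - w ∈ (xIdeal k (m+1) S i.castSucc ⊔ xIdeal k (m+1) S (Fin.last m)) •
        (⊤ : Submodule S (M j.castSucc)) := (Submodule.Quotient.eq _).mp E
    have h3 : w - yj ∈ (xIdeal k (m+1) S i.castSucc ⊔ xIdeal k (m+1) S (Fin.last m)) •
        (⊤ : Submodule S (M j.castSucc)) := by
      have := sub_mem h1 h2
      rwa [show z - yj - (z - w) = w - yj by abel] at this
    have h4 : (Submodule.Quotient.mk (w - yj) :
        M j.castSucc ⧸ xIdeal k (m+1) S (Fin.last m) • (⊤ : Submodule S (M j.castSucc))) ∈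
        xIdeal k (m+1) S i.castSucc • (⊤ : Submodule S (M j.castSucc ⧸
          xIdeal k (m+1) S (Fin.last m) • (⊤ : Submodule S (M j.castSucc)))) := (mk_mem_smul_top_iff _ _ _).mpr h3
    have h5 : (Submodule.Quotient.mk (xi - xj) :
        M (Fin.last m) ⧸ xIdeal k (m+1) S j.castSucc • (⊤ : Submodule S (M (Fin.last m)))) ∈
        xIdeal k (m+1) S i.castSucc • (⊤ : Submodule S (M (Fin.last m) ⧸
          xIdeal k (m+1) S j.castSucc • (⊤ : Submodule S (M (Fin.last m))))) := by
      rw [← mem_smul_top_equiv (φ (Fin.last m) j.castSucc (hne j))]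
      have heq : φ (Fin.last m) j.castSucc (hne j)
          (Submodule.Quotient.mk (xi - xj) :
            M (Fin.last m) ⧸ xIdeal k (m+1) S j.castSucc • ⊤) =
          Submodule.Quotient.mk (w - yj) := by
        rw [Submodule.Quotient.mk_sub, map_sub, ← hw, hφj, ← Submodule.Quotient.mk_sub]
      rw [heq]
      exact h4
    have h6 : xi - xj ∈ (xIdeal k (m+1) S i.castSucc ⊔ xIdeal k (m+1) S j.castSucc) •
        (⊤ : Submodule S (M (Fin.last m))) := (mk_mem_smul_top_iff _ _ _).mp h5
    show qfactor (Submodule.smul_mono_left le_sup_left) (p i) =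
      qfactor (Submodule.smul_mono_left le_sup_right) (p j)
    rw [← hxi, ← hxj, qfactor_mk, qfactor_mk, Submodule.Quotient.eq]
    exact h6
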